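/- For positive integers n and m, sum over divisors d of n of d * (sum_{k=0}^{m} L_k(d)) equals (B_{n+1}(m+1) - B_{n+1})/(n+1), where B denotes Bernoulli polynomials and numbers. -/

import Mathlib

/-- Witt's formula: the number of `k`-ary Lyndon words of length `n`. -/
noncomputable def lyndonCount (k n : ℕ) : ℚ :=
  (1 / n) * ∑ d ∈ n.divisors, (ArithmeticFunction.moebius (n / d) : ℚ) * (k : ℚ) ^ d

lemma sum_divisors_mul_lyndonCount (k n : ℕ) (hn : 0 < n) :
    ∑ d ∈ n.divisors, (d : ℚ) * lyndonCount k d = (k : ℚ) ^ n := by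
  have key : ∀ N > 0, ∑ d ∈ N.divisors,
      (∑ e ∈ d.divisors, (ArithmeticFunction.moebius (d / e) : ℚ) * (k : ℚ) ^ e) = (k : ℚ) ^ N := by
    rw [ArithmeticFunction.sum_eq_iff_sum_smul_moebius_eq]
    intro N hN
    rw [← Nat.sum_divisorsAntidiagonal' (f := fun a b => (ArithmeticFunction.moebius a : ℚ) * (k : ℚ) ^ b)]
    refine Finset.sum_congr rfl fun x _ => ?_
    rw [zsmul_eq_mul]
  rw [← key n hn]
  refine Finset.sum_congr rfl fun d hd => ?_
  have hd0 : (d : ℚ) ≠ 0 := by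
    exact_mod_cast (Nat.pos_of_mem_divisors hd).ne'
  rw [lyndonCount]
  field_simp

theorem sum_divisors_lyndonCount_eq_bernoulli (n m : ℕ) (hn : 1 ≤ n) (hm : 1 ≤ m) :
    ∑ d ∈ n.divisors, (d : ℚ) * ∑ k ∈ Finset.range (m + 1), lyndonCount k d =
      ((Polynomial.bernoulli (n + 1)).eval ((m : ℚ) + 1) - bernoulli (n + 1)) / (n + 1) := by
  have h1 : ∑ d ∈ n.divisors, (d : ℚ) * ∑ k ∈ Finset.range (m + 1), lyndonCount k d
      = ∑ k ∈ Finset.range (m + 1), (k : ℚ) ^ n := by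
    simp_rw [Finset.mul_sum]
    rw [Finset.sum_comm]
    exact Finset.sum_congr rfl fun k _ => sum_divisors_mul_lyndonCount k n hn
  have h2 := Polynomial.sum_range_pow_eq_bernoulli_sub (m + 1) n
  have hne : ((n : ℚ) + 1) ≠ 0 := by positivity
  push_cast at h2
  rw [h1, eq_div_iff hne, mul_comm]
  exact_mod_cast h2
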